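/- (Global solvability of the boost equation, part of Proposition 3.) Let s₁, t₁ : (0,∞) → ℝ³ be continuous, let r₀ > 0 and w₀ ∈ ℝ³. Then there exists a unique differentiable function w : (0,∞) → ℝ³ such that w(r₀) = w₀ and, for every r > 0, w'(r) = √(1+‖w(r)‖²) · t₁(r) + s₁(r) × w(r). In particular the solution does not blow up in finite time: it is defined on all of (0,∞). -/

import Mathlib

open Matrix Set
noncomputable section
namespace BoostAux

lemma dot_self_nonneg (x : Fin 3 → ℝ) : 0 ≤ x ⬝ᵥ x :=
  Finset.sum_nonneg fun i _ => mul_self_nonneg (x i)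

lemma dot_le (x y : Fin 3 → ℝ) : x ⬝ᵥ y ≤ Real.sqrt (x ⬝ᵥ x) * Real.sqrt (y ⬝ᵥ y) := by
  have h := Finset.sum_mul_sq_le_sq_mul_sq Finset.univ x y
  have h2 : Real.sqrt ((x ⬝ᵥ y)^2) ≤ Real.sqrt ((x ⬝ᵥ x) * (y ⬝ᵥ y)) := by
    apply Real.sqrt_le_sqrt
    simpa [dotProduct, pow_two, Finset.mul_sum, mul_comm, mul_assoc, mul_left_comm] using h
  calc x ⬝ᵥ y ≤ |x ⬝ᵥ y| := le_abs_self _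
    _ = Real.sqrt ((x ⬝ᵥ y)^2) := (Real.sqrt_sq_eq_abs _).symm
    _ ≤ Real.sqrt ((x ⬝ᵥ x) * (y ⬝ᵥ y)) := h2
    _ = _ := Real.sqrt_mul (dot_self_nonneg x) _

lemma dot_self_le (x : Fin 3 → ℝ) : x ⬝ᵥ x ≤ 3 * ‖x‖^2 := by
  have h : ∀ i, x i * x i ≤ ‖x‖^2 := fun i => by
    have h1 := norm_le_pi_norm x i
    calc x i * x i = ‖x i‖^2 := by rw [Real.norm_eq_abs, sq_abs]; ring
      _ ≤ ‖x‖^2 := by nlinarith [norm_nonneg (x i)]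
  calc x ⬝ᵥ x = ∑ i, x i * x i := rfl
    _ ≤ ∑ _i : Fin 3, ‖x‖^2 := Finset.sum_le_sum fun i _ => h i
    _ = 3 * ‖x‖^2 := by simp [Finset.sum_const]

lemma sqrt_dot_le (x : Fin 3 → ℝ) : Real.sqrt (x ⬝ᵥ x) ≤ Real.sqrt 3 * ‖x‖ := by
  rw [show Real.sqrt 3 * ‖x‖ = Real.sqrt (3 * ‖x‖^2) by
    rw [Real.sqrt_mul (by norm_num), Real.sqrt_sq (norm_nonneg x)]]
  exact Real.sqrt_le_sqrt (dot_self_le x)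

lemma one_add_dot_pos (x : Fin 3 → ℝ) : (0:ℝ) < 1 + x ⬝ᵥ x := by
  have := dot_self_nonneg x; linarith

/-- One-sided Lipschitz estimate for `√(1 + x⬝x)`. -/
lemma sqrt_lip (x y : Fin 3 → ℝ) :
    Real.sqrt (1 + x ⬝ᵥ x) ≤ Real.sqrt (1 + y ⬝ᵥ y) + Real.sqrt 3 * ‖x - y‖ := by
  set d := x - y with hd
  have hx : x = y + d := by rw [hd]; abel
  have hdot : x ⬝ᵥ x = y ⬝ᵥ y + 2 * (y ⬝ᵥ d) + d ⬝ᵥ d := by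
    rw [hx]; simp [add_dotProduct, dotProduct_add, dotProduct_comm d y]; ring
  have hyd : y ⬝ᵥ d ≤ Real.sqrt (1 + y ⬝ᵥ y) * (Real.sqrt 3 * ‖d‖) := by
    calc y ⬝ᵥ d ≤ Real.sqrt (y ⬝ᵥ y) * Real.sqrt (d ⬝ᵥ d) := dot_le y d
      _ ≤ Real.sqrt (1 + y ⬝ᵥ y) * (Real.sqrt 3 * ‖d‖) := by
          apply mul_le_mul (Real.sqrt_le_sqrt (by linarith)) (sqrt_dot_le d)
            (Real.sqrt_nonneg _) (Real.sqrt_nonneg _)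
  have hdd : d ⬝ᵥ d ≤ 3 * ‖d‖^2 := dot_self_le d
  have hs := Real.sq_sqrt (one_add_dot_pos y).le
  have h3 : Real.sqrt 3 ^ 2 = 3 := Real.sq_sqrt (by norm_num)
  have hrhs : (0:ℝ) ≤ Real.sqrt (1 + y ⬝ᵥ y) + Real.sqrt 3 * ‖d‖ := by positivity
  rw [show Real.sqrt (1 + y ⬝ᵥ y) + Real.sqrt 3 * ‖d‖
      = Real.sqrt ((Real.sqrt (1 + y ⬝ᵥ y) + Real.sqrt 3 * ‖d‖)^2) from
    (Real.sqrt_sq hrhs).symm]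
  apply Real.sqrt_le_sqrt
  have expand : (Real.sqrt (1 + y ⬝ᵥ y) + Real.sqrt 3 * ‖d‖)^2
      = (1 + y ⬝ᵥ y) + 2 * Real.sqrt (1 + y ⬝ᵥ y) * (Real.sqrt 3 * ‖d‖) + 3 * ‖d‖^2 := by
    ring_nf
    nlinarith [hs, h3]
  rw [expand, hdot]; nlinarith [hyd, hdd]

lemma cross_norm_le (s x : Fin 3 → ℝ) : ‖crossProduct s x‖ ≤ 2 * ‖s‖ * ‖x‖ := by
  rw [pi_norm_le_iff_of_nonneg (by positivity)]
  intro i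
  have hb : ∀ j k l m : Fin 3, ‖s j * x k - s l * x m‖ ≤ 2 * ‖s‖ * ‖x‖ := by
    intro j k l m
    calc ‖s j * x k - s l * x m‖ ≤ ‖s j * x k‖ + ‖s l * x m‖ := norm_sub_le _ _
      _ = ‖s j‖ * ‖x k‖ + ‖s l‖ * ‖x m‖ := by simp [norm_mul]
      _ ≤ ‖s‖ * ‖x‖ + ‖s‖ * ‖x‖ := by
          gcongr <;> first | exact norm_le_pi_norm _ _
      _ = 2 * ‖s‖ * ‖x‖ := by ring
  fin_cases i <;> simpa [crossProduct] using hb _ _ _ _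

end BoostAux

namespace BoostAux
open Matrix Set

/-- The ODE vector field. -/
def vf (s₁ t₁ : ℝ → Fin 3 → ℝ) (t : ℝ) (x : Fin 3 → ℝ) : Fin 3 → ℝ :=
  Real.sqrt (1 + x ⬝ᵥ x) • t₁ t + crossProduct (s₁ t) x

lemma abs_sqrt_sub (x y : Fin 3 → ℝ) :
    |Real.sqrt (1 + x ⬝ᵥ x) - Real.sqrt (1 + y ⬝ᵥ y)| ≤ Real.sqrt 3 * ‖x - y‖ := by
  rw [abs_sub_le_iff]
  constructor
  · linarith [sqrt_lip x y]
  · have := sqrt_lip y x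
    rw [show ‖y - x‖ = ‖x - y‖ from norm_sub_rev y x] at this
    linarith

lemma vf_lip {s₁ t₁ : ℝ → Fin 3 → ℝ} {t : ℝ} {M : ℝ}
    (hs : ‖s₁ t‖ ≤ M) (ht : ‖t₁ t‖ ≤ M) :
    LipschitzWith (Real.toNNReal ((Real.sqrt 3 + 2) * M)) (vf s₁ t₁ t) := by
  have hM : 0 ≤ M := le_trans (norm_nonneg _) hs
  apply LipschitzWith.of_dist_le_mul
  intro x y
  rw [dist_eq_norm, dist_eq_norm]
  have key : vf s₁ t₁ t x - vf s₁ t₁ t y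
      = (Real.sqrt (1 + x ⬝ᵥ x) - Real.sqrt (1 + y ⬝ᵥ y)) • t₁ t
        + crossProduct (s₁ t) (x - y) := by
    simp only [vf, sub_smul, map_sub]
    abel
  rw [key]
  calc ‖_ + _‖ ≤ ‖(Real.sqrt (1 + x ⬝ᵥ x) - Real.sqrt (1 + y ⬝ᵥ y)) • t₁ t‖
        + ‖crossProduct (s₁ t) (x - y)‖ := norm_add_le _ _
    _ ≤ Real.sqrt 3 * ‖x - y‖ * M + 2 * M * ‖x - y‖ := by
        apply add_le_add
        · rw [norm_smul, Real.norm_eq_abs]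
          exact mul_le_mul (abs_sqrt_sub x y) ht (norm_nonneg _) (by positivity)
        · calc ‖crossProduct (s₁ t) (x - y)‖ ≤ 2 * ‖s₁ t‖ * ‖x - y‖ := cross_norm_le _ _
            _ ≤ 2 * M * ‖x - y‖ := by gcongr
    _ ≤ ((Real.sqrt 3 + 2) * M) * ‖x - y‖ := by ring_nf; nlinarith [norm_nonneg (x - y)]
    _ = (Real.toNNReal ((Real.sqrt 3 + 2) * M) : ℝ) * ‖x - y‖ := by
        rw [Real.coe_toNNReal _ (by positivity)]

lemma vf_growth {s₁ t₁ : ℝ → Fin 3 → ℝ} {t : ℝ} {M : ℝ}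
    (hs : ‖s₁ t‖ ≤ M) (ht : ‖t₁ t‖ ≤ M) (x : Fin 3 → ℝ) :
    ‖vf s₁ t₁ t x‖ ≤ (Real.sqrt 3 + 2) * M * ‖x‖ + M := by
  have hM : 0 ≤ M := le_trans (norm_nonneg _) hs
  have h1 : Real.sqrt (1 + x ⬝ᵥ x) ≤ 1 + Real.sqrt 3 * ‖x‖ := by
    have := sqrt_lip x 0
    simpa [dotProduct, Real.sqrt_one] using this
  have h1' : (0:ℝ) ≤ Real.sqrt (1 + x ⬝ᵥ x) := Real.sqrt_nonneg _
  calc ‖vf s₁ t₁ t x‖ ≤ ‖Real.sqrt (1 + x ⬝ᵥ x) • t₁ t‖ + ‖crossProduct (s₁ t) x‖ :=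
        norm_add_le _ _
    _ ≤ (1 + Real.sqrt 3 * ‖x‖) * M + 2 * M * ‖x‖ := by
        apply add_le_add
        · rw [norm_smul, Real.norm_eq_abs, abs_of_nonneg h1']
          exact mul_le_mul h1 ht (norm_nonneg _) (by positivity)
        · calc ‖crossProduct (s₁ t) x‖ ≤ 2 * ‖s₁ t‖ * ‖x‖ := cross_norm_le _ _
            _ ≤ 2 * M * ‖x‖ := by gcongr
    _ = (Real.sqrt 3 + 2) * M * ‖x‖ + M := by ring

end BoostAux
open Set
section Glue
variable {E : Type*} [NormedAddCommGroup E] [NormedSpace ℝ E]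

lemma my_hasDerivWithinAt_singleton (f : ℝ → E) (c : E) (x : ℝ) :
    HasDerivWithinAt f c {x} x := by
  exact HasFDerivWithinAt.of_not_accPt (by rw [accPt_iff_clusterPt, Filter.inf_principal]; simp [ClusterPt])

lemma my_hasDerivWithinAt_of_nmem_closure {f : ℝ → E} {c : E} {s : Set ℝ} {x : ℝ}
    (h : x ∉ closure s) : HasDerivWithinAt f c s x :=
  HasFDerivWithinAt.of_notMem_closure h

/-- Gluing two solutions of an ODE at a common endpoint. -/
lemma glue_solutions {v : ℝ → E → E} {a c b : ℝ} (hac : a ≤ c) (hcb : c ≤ b)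
    {y z : ℝ → E} (hyz : y c = z c)
    (hy : ∀ t ∈ Icc a c, HasDerivWithinAt y (v t (y t)) (Icc a c) t)
    (hz : ∀ t ∈ Icc c b, HasDerivWithinAt z (v t (z t)) (Icc c b) t) :
    ∃ w : ℝ → E, EqOn w y (Icc a c) ∧ EqOn w z (Icc c b) ∧
      ∀ t ∈ Icc a b, HasDerivWithinAt w (v t (w t)) (Icc a b) t := by
  classical
  refine ⟨fun t => if t ≤ c then y t else z t, ?_, ?_, ?_⟩
  · intro t ht; simp [ht.2]
  · intro t ht
    rcases eq_or_lt_of_le ht.1 with h | h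
    · simp [← h, hyz]
    · simp [not_le.mpr h]
  · intro t ht
    set w : ℝ → E := fun t => if t ≤ c then y t else z t with hw
    have hwy : EqOn w y (Icc a c) := fun r hr => by simp [hw, hr.2]
    have hwz : EqOn w z (Icc c b) := by
      intro r hr
      rcases eq_or_lt_of_le hr.1 with h | h
      · simp [hw, ← h, hyz]
      · simp [hw, not_le.mpr h]
    rw [← Icc_union_Icc_eq_Icc hac hcb]
    rcases le_or_gt t c with htc | htc
    · have ht1 : t ∈ Icc a c := ⟨ht.1, htc⟩
      have hleft : HasDerivWithinAt w (v t (w t)) (Icc a c) t := by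
        have := (hy t ht1).congr hwy (hwy ht1)
        rwa [hwy ht1]
      refine hleft.union ?_
      rcases eq_or_lt_of_le htc with h | h
      · have ht2 : t ∈ Icc c b := ⟨le_of_eq h.symm, h ▸ hcb⟩
        have := (hz t ht2).congr hwz (hwz ht2)
        rwa [hwz ht2]
      · exact my_hasDerivWithinAt_of_nmem_closure (by
          rw [closure_Icc]; exact fun hmem => absurd hmem.1 (not_le.mpr h))
    · have ht2 : t ∈ Icc c b := ⟨htc.le, ht.2⟩
      have hright : HasDerivWithinAt w (v t (w t)) (Icc c b) t := by
        have := (hz t ht2).congr hwz (hwz ht2)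
        rwa [hwz ht2]
      refine HasDerivWithinAt.union ?_ hright
      exact my_hasDerivWithinAt_of_nmem_closure (by
        rw [closure_Icc]; exact fun hmem => absurd hmem.2 (not_le.mpr htc))

/-- An explicit bound for `gronwallBound`. -/
lemma my_gronwallBound_le {δ K ε x T : ℝ} (hδ : 0 ≤ δ) (hK : 0 ≤ K) (hε : 0 ≤ ε)
    (hx : 0 ≤ x) (hxT : x ≤ T) :
    gronwallBound δ K ε x ≤ (δ + ε * T) * Real.exp (K * T) := by
  have hT : 0 ≤ T := le_trans hx hxT
  have hexp1 : (1:ℝ) ≤ Real.exp (K * T) := Real.one_le_exp (by positivity)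
  rcases eq_or_lt_of_le hK with h0 | h0
  · rw [← h0, gronwallBound_K0]
    simp only [zero_mul, Real.exp_zero, mul_one]
    nlinarith
  · rw [gronwallBound_of_K_ne_0 h0.ne']
    have key : Real.exp (K * x) - 1 ≤ K * x * Real.exp (K * x) := by
      have h1 : 1 - K * x ≤ Real.exp (-(K * x)) := by
        have := Real.add_one_le_exp (-(K * x)); linarith
      have h2 : Real.exp (-(K * x)) * Real.exp (K * x) = 1 := by
        rw [← Real.exp_add]; simp
      nlinarith [Real.exp_pos (K * x), Real.exp_pos (-(K * x))]
    have hmx : Real.exp (K * x) ≤ Real.exp (K * T) := Real.exp_le_exp.mpr (by nlinarith)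
    have h4 : ε / K * (Real.exp (K * x) - 1) ≤ ε * T * Real.exp (K * T) := by
      rw [div_mul_eq_mul_div, div_le_iff₀ h0]
      calc ε * (Real.exp (K * x) - 1) ≤ ε * (K * x * Real.exp (K * x)) := by
            apply mul_le_mul_of_nonneg_left key hε
        _ ≤ ε * T * Real.exp (K * T) * K := by
            have hxe : x * Real.exp (K * x) ≤ T * Real.exp (K * T) :=
              mul_le_mul hxT hmx (Real.exp_pos _).le hT
            nlinarith [hxe, mul_nonneg hε hK]
      
    nlinarith [mul_le_mul_of_nonneg_left hmx hδ]
end Glue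

section Fwd
open Set
variable {E : Type*} [NormedAddCommGroup E] [NormedSpace ℝ E] [CompleteSpace E]

theorem exists_solution_Icc_fwd (v : ℝ → E → E) (a b : ℝ) (hab : a ≤ b) (K : NNReal)
    (hlip : ∀ t ∈ Icc a b, LipschitzWith K (v t))
    (hcont : ∀ x, ContinuousOn (fun t => v t x) (Icc a b))
    (x₀ : E) :
    ∃ y : ℝ → E, y a = x₀ ∧ ∀ t ∈ Icc a b, HasDerivWithinAt y (v t (y t)) (Icc a b) t := by
  obtain ⟨M₀, hM₀⟩ := isCompact_Icc.exists_bound_of_continuousOn (hcont 0)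
  set M := max M₀ 0 with hMdef
  have hM : 0 ≤ M := le_max_right _ _
  have growth : ∀ t ∈ Icc a b, ∀ x : E, ‖v t x‖ ≤ (K : ℝ) * ‖x‖ + M := by
    intro t ht x
    have h1 : dist (v t x) (v t 0) ≤ (K : ℝ) * dist x 0 := (hlip t ht).dist_le_mul x 0
    rw [dist_eq_norm, dist_eq_norm, sub_zero] at h1
    have h2 : ‖v t x‖ - ‖v t 0‖ ≤ ‖v t x - v t 0‖ := norm_sub_norm_le _ _
    have h3 : ‖v t 0‖ ≤ M := le_trans (hM₀ t ht) (le_max_left _ _)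
    linarith
  set B := (‖x₀‖ + M * (b - a)) * Real.exp ((K : ℝ) * (b - a)) with hBdef
  have hB : 0 ≤ B := by
    have : (0:ℝ) ≤ b - a := by linarith
    positivity
  have apriori : ∀ c ∈ Icc a b, ∀ y : ℝ → E, y a = x₀ →
      (∀ t ∈ Icc a c, HasDerivWithinAt y (v t (y t)) (Icc a c) t) →
      ∀ t ∈ Icc a c, ‖y t‖ ≤ B := by
    intro c hc y hy0 hy t ht
    have hconty : ContinuousOn y (Icc a c) := fun r hr => (hy r hr).continuousWithinAt
    have hderiv : ∀ r ∈ Ico a c, HasDerivWithinAt y (v r (y r)) (Ici r) r := by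
      intro r hr
      exact (hy r ⟨hr.1, hr.2.le⟩).mono_of_mem_nhdsWithin (Icc_mem_nhdsGE_of_mem hr)
    have hbound : ∀ r ∈ Ico a c, ‖v r (y r)‖ ≤ (K : ℝ) * ‖y r‖ + M := fun r hr =>
      growth r ⟨hr.1, hr.2.le.trans hc.2⟩ _
    have hinit : ‖y a‖ ≤ ‖x₀‖ := by rw [hy0]
    have := norm_le_gronwallBound_of_norm_deriv_right_le hconty hderiv hinit hbound t ht
    refine le_trans this ?_
    exact my_gronwallBound_le (norm_nonneg _) (K.coe_nonneg) hM
      (by linarith [ht.1]) (by linarith [ht.2, hc.2])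
  set C := (K : ℝ) * (B + 1) + M + 1 with hCdef
  have hC : 0 < C := by positivity
  set ε := 1 / C with hεdef
  have hε : 0 < ε := by positivity
  have main : ∀ k : ℕ, ∃ y : ℝ → E, y a = x₀ ∧
      ∀ t ∈ Icc a (min (a + k * ε) b),
        HasDerivWithinAt y (v t (y t)) (Icc a (min (a + k * ε) b)) t := by
    intro k
    induction k with
    | zero =>
      refine ⟨fun _ => x₀, rfl, ?_⟩
      have hmin : min (a + (0:ℕ) * ε) b = a := by
        rw [Nat.cast_zero, zero_mul, add_zero]; exact min_eq_left hab
      rw [hmin, Icc_self]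
      intro t ht
      rw [mem_singleton_iff] at ht
      subst ht
      exact my_hasDerivWithinAt_singleton _ _ _
    | succ k ih =>
      obtain ⟨y, hy0, hy⟩ := ih
      set c := min (a + k * ε) b with hc
      set c' := min (a + (k + 1 : ℕ) * ε) b with hc'
      have hkε : (0:ℝ) ≤ k * ε := by positivity
      have hac : a ≤ c := le_min (by linarith) hab
      have hcc' : c ≤ c' := by
        apply min_le_min _ le_rfl
        push_cast
        nlinarith
      have hcb : c ≤ b := min_le_right _ _
      have hc'b : c' ≤ b := min_le_right _ _
      by_cases hbig : b ≤ a + k * ε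
      · have h1 : c = b := min_eq_right hbig
        have h2 : c' = b := min_eq_right (by push_cast; nlinarith)
        exact ⟨y, hy0, by rw [h2, ← h1]; exact hy⟩
      · push_neg at hbig
        have hceq : c = a + k * ε := min_eq_left hbig.le
        have hyB : ∀ t ∈ Icc a c, ‖y t‖ ≤ B := apriori c ⟨hac, hcb⟩ y hy0 hy
        have hycB : ‖y c‖ ≤ B := hyB c ⟨hac, le_rfl⟩
        have hpl : IsPicardLindelof v (tmin := c) (tmax := c') ⟨c, le_rfl, hcc'⟩ (y c) 1 0
            (Real.toNNReal C) K :=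
          { lipschitzOnWith := fun t ht =>
              (hlip t ⟨hac.trans ht.1, ht.2.trans hc'b⟩).lipschitzOnWith
            continuousOn := fun x _ => (hcont x).mono (Icc_subset_Icc hac hc'b)
            norm_le := by
              intro t ht x hx
              rw [Real.coe_toNNReal _ hC.le]
              have hxB : ‖x‖ ≤ B + 1 := by
                have : ‖x - y c‖ ≤ 1 := by simpa using mem_closedBall_iff_norm.mp hx
                calc ‖x‖ = ‖x - y c + y c‖ := by congr 1; abel
                  _ ≤ ‖x - y c‖ + ‖y c‖ := norm_add_le _ _
                  _ ≤ B + 1 := by linarith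
              calc ‖v t x‖ ≤ (K : ℝ) * ‖x‖ + M :=
                    growth t ⟨hac.trans ht.1, ht.2.trans hc'b⟩ x
                _ ≤ C := by
                    have : (K:ℝ) * ‖x‖ ≤ (K:ℝ) * (B + 1) :=
                      mul_le_mul_of_nonneg_left hxB K.coe_nonneg
                    rw [hCdef]; linarith
            mul_max_le := by
              rw [Real.coe_toNNReal _ hC.le]
              simp only [NNReal.coe_one, NNReal.coe_zero, sub_zero]
              show C * max (c' - c) (c - c) ≤ 1
              have h1 : max (c' - c) (c - c) = c' - c := max_eq_left (by linarith)
              have h2 : c' - c ≤ ε := by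
                have : c' ≤ a + (k + 1 : ℕ) * ε := min_le_left _ _
                push_cast at this
                rw [hceq]; linarith
              rw [h1]
              calc C * (c' - c) ≤ C * ε := mul_le_mul_of_nonneg_left h2 hC.le
                _ = 1 := by rw [hεdef]; field_simp }
        obtain ⟨z, hz0, hz⟩ := hpl.exists_eq_forall_mem_Icc_hasDerivWithinAt₀
        obtain ⟨w, hwy, hwz, hw⟩ := glue_solutions hac hcc' hz0.symm hy hz
        exact ⟨w, (hwy ⟨le_rfl, hac⟩).trans hy0, hw⟩
  obtain ⟨k, hk⟩ := exists_nat_ge ((b - a) / ε)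
  obtain ⟨y, hy0, hy⟩ := main k
  have hmin : min (a + k * ε) b = b := by
    apply min_eq_right
    rw [div_le_iff₀ hε] at hk
    linarith
  rw [hmin] at hy
  exact ⟨y, hy0, hy⟩

end Fwd

section TwoSided
open Set
variable {E : Type*} [NormedAddCommGroup E] [NormedSpace ℝ E] [CompleteSpace E]

theorem exists_solution_Icc_both (v : ℝ → E → E) (a b r₀ : ℝ) (har : a ≤ r₀) (hrb : r₀ ≤ b)
    (K : NNReal) (hlip : ∀ t ∈ Icc a b, LipschitzWith K (v t))
    (hcont : ∀ x, ContinuousOn (fun t => v t x) (Icc a b)) (x₀ : E) :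
    ∃ y : ℝ → E, y r₀ = x₀ ∧ ∀ t ∈ Icc a b, HasDerivWithinAt y (v t (y t)) (Icc a b) t := by
  obtain ⟨yp, hyp0, hyp⟩ := exists_solution_Icc_fwd v r₀ b hrb K
    (fun t ht => hlip t ⟨har.trans ht.1, ht.2⟩)
    (fun x => (hcont x).mono (Icc_subset_Icc har le_rfl)) x₀
  set v' : ℝ → E → E := fun t x => -(v (-t) x) with hv'
  have hlip' : ∀ t ∈ Icc (-r₀) (-a), LipschitzWith K (v' t) := by
    intro t ht
    have hmem : -t ∈ Icc a b := ⟨by linarith [ht.2], by linarith [ht.1]⟩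
    have := LipschitzWith.id.neg.comp (hlip (-t) hmem)
    rwa [one_mul] at this
  have hmaps : MapsTo (fun s : ℝ => -s) (Icc a r₀) (Icc (-r₀) (-a)) :=
    fun s hs => ⟨neg_le_neg hs.2, neg_le_neg hs.1⟩
  have hcont' : ∀ x, ContinuousOn (fun t => v' t x) (Icc (-r₀) (-a)) := by
    intro x
    have hmaps2 : MapsTo (fun s : ℝ => -s) (Icc (-r₀) (-a)) (Icc a b) := by
      intro s hs
      simp only [mem_Icc] at hs ⊢
      constructor <;> linarith [hs.1, hs.2]
    exact (((hcont x).comp continuousOn_neg hmaps2)).neg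
  obtain ⟨u, hu0, hu⟩ := exists_solution_Icc_fwd v' (-r₀) (-a) (by linarith) K hlip' hcont' x₀
  set ym : ℝ → E := fun t => u (-t) with hym
  have hym0 : ym r₀ = x₀ := hu0
  have hym' : ∀ t ∈ Icc a r₀, HasDerivWithinAt ym (v t (ym t)) (Icc a r₀) t := by
    intro t ht
    have hmem : -t ∈ Icc (-r₀) (-a) := ⟨neg_le_neg ht.2, neg_le_neg ht.1⟩
    have h1 := hu (-t) hmem
    have h2 : HasDerivWithinAt (fun s : ℝ => -s) (-1) (Icc a r₀) t :=
      (hasDerivAt_neg t).hasDerivWithinAt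
    have h3 := h1.scomp t h2 hmaps
    have h4 : ((-1 : ℝ) • v' (-t) (u (-t))) = v t (ym t) := by
      simp [hv', hym, neg_neg]
    rw [h4] at h3
    exact h3
  obtain ⟨w, hwl, _, hw⟩ := glue_solutions har hrb (hym0.trans hyp0.symm) hym' hyp
  exact ⟨w, (hwl ⟨har, le_rfl⟩).trans hym0, hw⟩

end TwoSided

namespace BoostAux
open Matrix Set

lemma vf_contOn {s₁ t₁ : ℝ → Fin 3 → ℝ} {S : Set ℝ}
    (hs : ContinuousOn s₁ S) (ht : ContinuousOn t₁ S) (x : Fin 3 → ℝ) :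
    ContinuousOn (fun t => vf s₁ t₁ t x) S := by
  apply ContinuousOn.add
  · exact ht.const_smul (Real.sqrt (1 + x ⬝ᵥ x))
  · exact (crossProduct.flip x).continuous_of_finiteDimensional.comp_continuousOn hs

/-- Uniqueness of solutions on an open interval around `r₀` inside `(0,∞)`. -/
lemma uniq_on_Ioo {s₁ t₁ : ℝ → Fin 3 → ℝ}
    (hs : ContinuousOn s₁ (Set.Ioi 0)) (ht : ContinuousOn t₁ (Set.Ioi 0))
    {r₀ a b : ℝ} (ha : 0 < a) (har : a < r₀) (hrb : r₀ < b)
    (y z : ℝ → Fin 3 → ℝ)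
    (hy : ∀ t ∈ Ioo a b, HasDerivAt y (vf s₁ t₁ t (y t)) t)
    (hz : ∀ t ∈ Ioo a b, HasDerivAt z (vf s₁ t₁ t (z t)) t)
    (h0 : y r₀ = z r₀) : EqOn y z (Ioo a b) := by
  have hab : a ≤ b := by linarith
  have hsub : Icc a b ⊆ Ioi 0 := fun t ht' => lt_of_lt_of_le ha ht'.1
  obtain ⟨Ms, hMs⟩ := isCompact_Icc.exists_bound_of_continuousOn (hs.mono hsub)
  obtain ⟨Mt, hMt⟩ := isCompact_Icc.exists_bound_of_continuousOn (ht.mono hsub)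
  set M := max Ms Mt with hM
  set clamp : ℝ → ℝ := fun t => max a (min t b) with hclamp
  have hclamp_mem : ∀ t, clamp t ∈ Icc a b :=
    fun t => ⟨le_max_left _ _, max_le hab (min_le_right _ _)⟩
  have hclamp_eq : ∀ t ∈ Ioo a b, clamp t = t := by
    intro t ht'
    rw [hclamp]
    simp only
    rw [min_eq_left ht'.2.le, max_eq_right ht'.1.le]
  have huniq := ODE_solution_unique_of_mem_Ioo
    (v := fun t x => vf s₁ t₁ (clamp t) x) (s := fun _ => univ)
    (K := Real.toNNReal ((Real.sqrt 3 + 2) * M))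
    (fun t _ => by
      have hl := (vf_lip
        (le_trans (hMs _ (hclamp_mem t)) (le_max_left Ms Mt))
        (le_trans (hMt _ (hclamp_mem t)) (le_max_right Ms Mt))).lipschitzOnWith
        (s := (univ : Set (Fin 3 → ℝ)))
      exact hl)
    (t₀ := r₀) (a := a) (b := b) ⟨har, hrb⟩
    (f := y) (g := z)
    (fun t ht' => ⟨by
      show HasDerivAt y (vf s₁ t₁ (clamp t) (y t)) t
      rw [hclamp_eq t ht']; exact hy t ht', trivial⟩)
    (fun t ht' => ⟨by
      show HasDerivAt z (vf s₁ t₁ (clamp t) (z t)) t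
      rw [hclamp_eq t ht']; exact hz t ht', trivial⟩) h0
  exact huniq

end BoostAux


open Matrix

/-- global solvability of the boost equation: given continuous
`s₁, t₁ : (0,∞) → ℝ³`, `r₀ > 0` and `w₀ ∈ ℝ³`, there is a unique differentiable
`w : (0,∞) → ℝ³` with `w(r₀) = w₀` and
`w'(r) = √(1+‖w(r)‖²) t₁(r) + s₁(r) × w(r)` for all `r > 0`. -/
theorem boost_ode_global_solution (s₁ t₁ : ℝ → Fin 3 → ℝ)
    (hs : ContinuousOn s₁ (Set.Ioi 0)) (ht : ContinuousOn t₁ (Set.Ioi 0))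
    (r₀ : ℝ) (hr₀ : 0 < r₀) (w₀ : Fin 3 → ℝ) :
    ∃ w : ℝ → Fin 3 → ℝ,
      (w r₀ = w₀ ∧ ∀ r ∈ Set.Ioi (0 : ℝ),
        HasDerivAt w (Real.sqrt (1 + w r ⬝ᵥ w r) • t₁ r + crossProduct (s₁ r) (w r)) r) ∧
      ∀ w₂ : ℝ → Fin 3 → ℝ,
        (w₂ r₀ = w₀ ∧ ∀ r ∈ Set.Ioi (0 : ℝ),
          HasDerivAt w₂
            (Real.sqrt (1 + w₂ r ⬝ᵥ w₂ r) • t₁ r + crossProduct (s₁ r) (w₂ r)) r) →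
        ∀ r ∈ Set.Ioi (0 : ℝ), w₂ r = w r := by
  classical
  open Set BoostAux in
  set v : ℝ → (Fin 3 → ℝ) → (Fin 3 → ℝ) := BoostAux.vf s₁ t₁ with hv
  set A : ℕ → ℝ := fun n => min (1 / (n + 1)) (r₀ / 2) with hA
  set B : ℕ → ℝ := fun n => max ((n : ℝ) + 1) (r₀ + 1) with hB
  have hApos : ∀ n, 0 < A n := fun n => lt_min (by positivity) (by linarith)
  have hAr : ∀ n, A n < r₀ := fun n => lt_of_le_of_lt (min_le_right _ _) (by linarith)
  have hrB : ∀ n, r₀ < B n := fun n => lt_of_lt_of_le (by linarith) (le_max_right _ _)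
  have hIccsub : ∀ n, Icc (A n) (B n) ⊆ Ioi (0:ℝ) :=
    fun n t ht' => lt_of_lt_of_le (hApos n) ht'.1
  -- existence of a solution on each Icc (A n) (B n)
  have key : ∀ n : ℕ, ∃ y : ℝ → Fin 3 → ℝ, y r₀ = w₀ ∧
      ∀ t ∈ Icc (A n) (B n), HasDerivWithinAt y (v t (y t)) (Icc (A n) (B n)) t := by
    intro n
    obtain ⟨Ms, hMs⟩ := isCompact_Icc.exists_bound_of_continuousOn (hs.mono (hIccsub n))
    obtain ⟨Mt, hMt⟩ := isCompact_Icc.exists_bound_of_continuousOn (ht.mono (hIccsub n))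
    apply exists_solution_Icc_both v (A n) (B n) r₀ (hAr n).le (hrB n).le
      (Real.toNNReal ((Real.sqrt 3 + 2) * max Ms Mt))
    · intro t ht'
      exact BoostAux.vf_lip (le_trans (hMs t ht') (le_max_left _ _))
        (le_trans (hMt t ht') (le_max_right _ _))
    · intro x
      exact BoostAux.vf_contOn (hs.mono (hIccsub n)) (ht.mono (hIccsub n)) x
  choose sol hsol0 hsol using key
  -- the index function and the global solution
  set N : ℝ → ℕ := fun r => ⌈1 / r⌉₊ + ⌈r⌉₊ with hN
  set w : ℝ → Fin 3 → ℝ := fun r => sol (N r) r with hw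
  have hmem : ∀ r : ℝ, 0 < r → r ∈ Ioo (A (N r)) (B (N r)) := by
    intro r hr
    constructor
    · calc A (N r) ≤ 1 / ((N r : ℝ) + 1) := min_le_left _ _
        _ < r := by
          rw [div_lt_iff₀ (by positivity)]
          have h1 : 1 / r ≤ (⌈1/r⌉₊ : ℝ) := Nat.le_ceil _
          have h2 : ((⌈1/r⌉₊ : ℕ) : ℝ) ≤ (N r : ℝ) := by
            exact_mod_cast Nat.le_add_right _ _
          have h3 : 1 / r < (N r : ℝ) + 1 := by linarith
          calc (1:ℝ) = r * (1 / r) := by field_simp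
            _ < r * ((N r : ℝ) + 1) := by
                exact mul_lt_mul_of_pos_left h3 hr
    · calc r ≤ (⌈r⌉₊ : ℝ) := Nat.le_ceil r
        _ ≤ (N r : ℝ) := by exact_mod_cast Nat.le_add_left _ _
        _ < (N r : ℝ) + 1 := lt_add_one _
        _ ≤ B (N r) := le_max_left _ _
  have hderivn : ∀ n, ∀ t ∈ Ioo (A n) (B n), HasDerivAt (sol n) (v t (sol n t)) t := by
    intro n t ht'
    exact (hsol n t ⟨ht'.1.le, ht'.2.le⟩).hasDerivAt (Icc_mem_nhds ht'.1 ht'.2)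
  -- any two local solutions agree on overlaps
  have agree : ∀ n m : ℕ, ∀ r, r ∈ Ioo (A n) (B n) → r ∈ Ioo (A m) (B m) →
      sol n r = sol m r := by
    intro n m r hrn hrm
    have ha : (0:ℝ) < max (A n) (A m) := lt_of_lt_of_le (hApos n) (le_max_left _ _)
    have har : max (A n) (A m) < r₀ := max_lt (hAr n) (hAr m)
    have hrb : r₀ < min (B n) (B m) := lt_min (hrB n) (hrB m)
    refine BoostAux.uniq_on_Ioo hs ht ha har hrb (sol n) (sol m) ?_ ?_
      (by rw [hsol0 n, hsol0 m]) ⟨max_lt hrn.1 hrm.1, lt_min hrn.2 hrm.2⟩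
    · intro t ht'
      exact hderivn n t ⟨lt_of_le_of_lt (le_max_left _ _) ht'.1,
        lt_of_lt_of_le ht'.2 (min_le_left _ _)⟩
    · intro t ht'
      exact hderivn m t ⟨lt_of_le_of_lt (le_max_right _ _) ht'.1,
        lt_of_lt_of_le ht'.2 (min_le_right _ _)⟩
  -- w solves the ODE on (0, ∞)
  have hwderiv : ∀ r ∈ Ioi (0:ℝ), HasDerivAt w (v r (w r)) r := by
    intro r hr
    set n := N r with hn
    have hrmem := hmem r hr
    set U : Set ℝ := Ioo (A n) (B n) ∩ Ioi 0 with hU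
    have hUopen : IsOpen U := isOpen_Ioo.inter isOpen_Ioi
    have hrU : r ∈ U := ⟨hrmem, hr⟩
    have heqU : ∀ r' ∈ U, w r' = sol n r' := by
      intro r' hr'
      exact agree (N r') n r' (hmem r' hr'.2) hr'.1
    have heq : w =ᶠ[nhds r] sol n :=
      Filter.eventuallyEq_of_mem (hUopen.mem_nhds hrU) heqU
    have hd : HasDerivAt (sol n) (v r (sol n r)) r := hderivn n r hrmem
    have hd2 : HasDerivAt w (v r (sol n r)) r := hd.congr_of_eventuallyEq heq
    rwa [← heqU r hrU] at hd2
  refine ⟨w, ⟨?_, ?_⟩, ?_⟩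
  · show sol (N r₀) r₀ = w₀
    exact hsol0 _
  · intro r hr
    exact hwderiv r hr
  · rintro w₂ ⟨hw₂0, hw₂d⟩ r hr
    set n := N r with hn
    have hrmem := hmem r (mem_Ioi.mp hr)
    refine BoostAux.uniq_on_Ioo hs ht (hApos n) (hAr n) (hrB n) w₂ w ?_ ?_
      (by rw [hw₂0]; exact (hsol0 (N r₀)).symm) hrmem
    · intro t ht'
      exact hw₂d t (mem_Ioi.mpr (lt_of_lt_of_le (hApos n) ht'.1.le))
    · intro t ht'
      exact hwderiv t (mem_Ioi.mpr (lt_of_lt_of_le (hApos n) ht'.1.le))
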